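/- (Lemma: sketch for randomized rangefinder.) Let μ be a probability measure on ℝ that is absolutely continuous with respect to the Lebesgue measure, and let Γ be a random l×m real matrix whose l·m entries are i.i.d. with common law μ (i.e., Γ is distributed according to the product measure on the space of l×m matrices). Let A be a fixed m×n real matrix with rank r, and suppose l ≤ r. Then with probability 1, the matrix X = Γ A has full row rank, i.e., rank(Γ A) = l. -/

import Mathlib

open MeasureTheory Matrix

/-- Rows of a real matrix are linearly independent iff the Gram determinant is nonzero. -/
lemma gram_det_ne_zero_iff_aux {l n : ℕ} (B : Matrix (Fin l) (Fin n) ℝ) :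
    LinearIndependent ℝ B ↔ (B * Bᵀ).det ≠ 0 := by
  constructor
  · intro h hdet
    obtain ⟨v, hv0, hveq⟩ := (Matrix.exists_mulVec_eq_zero_iff).mpr hdet
    have hrank : (B * Bᵀ).rank = l := by
      rw [Matrix.rank_self_mul_transpose, h.rank_matrix, Fintype.card_fin]
    have hrn := LinearMap.finrank_range_add_finrank_ker (B * Bᵀ).mulVecLin
    have hfin : Module.finrank ℝ (Fin l → ℝ) = l := by simp
    have hker : Module.finrank ℝ (LinearMap.ker (B * Bᵀ).mulVecLin) = 0 := by
      have hr : Module.finrank ℝ (LinearMap.range (B * Bᵀ).mulVecLin) = l := hrank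
      omega
    have : LinearMap.ker (B * Bᵀ).mulVecLin = ⊥ := Submodule.finrank_eq_zero.mp hker
    have hvmem : v ∈ LinearMap.ker (B * Bᵀ).mulVecLin :=
      LinearMap.mem_ker.mpr (by rw [Matrix.mulVecLin_apply]; exact hveq)
    rw [this, Submodule.mem_bot] at hvmem
    exact hv0 hvmem
  · intro hdet
    have hU : IsUnit (B * Bᵀ) := (Matrix.isUnit_iff_isUnit_det _).mpr (isUnit_iff_ne_zero.mpr hdet)
    have h1 : (B * Bᵀ).rank = l := by rw [Matrix.rank_of_isUnit _ hU, Fintype.card_fin]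
    have h2 : l ≤ B.rank := by
      calc l = (B * Bᵀ).rank := h1.symm
        _ ≤ B.rank := Matrix.rank_mul_le_left B Bᵀ
    have h3 : B.rank ≤ l := by simpa using B.rank_le_card_height
    have h4 : B.rank = l := le_antisymm h3 h2
    apply linearIndependent_iff_card_eq_finrank_span.mpr
    rw [Fintype.card_fin, Set.finrank]
    rw [Matrix.rank_eq_finrank_span_row] at h4
    exact h4.symm

lemma measurableSet_li_aux {l m n : ℕ} (A : Matrix (Fin m) (Fin n) ℝ) :
    MeasurableSet {Γ : Fin l → Fin m → ℝ | LinearIndependent ℝ (Matrix.of Γ * A)} := by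
  have hset : {Γ : Fin l → Fin m → ℝ | LinearIndependent ℝ (Matrix.of Γ * A)}
      = (fun Γ : Fin l → Fin m → ℝ =>
          ((Matrix.of Γ * A) * (Matrix.of Γ * A)ᵀ).det) ⁻¹' ({0}ᶜ) := by
    ext Γ
    simp only [Set.mem_setOf_eq, Set.mem_preimage, Set.mem_compl_iff, Set.mem_singleton_iff]
    exact gram_det_ne_zero_iff_aux (Matrix.of Γ * A)
  rw [hset]
  have h1 : Continuous fun Γ : Fin l → Fin m → ℝ => (Matrix.of Γ * A) := by
    have : Continuous fun Γ : Fin l → Fin m → ℝ => (Matrix.of Γ : Matrix (Fin l) (Fin m) ℝ) :=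
      continuous_id
    exact this.matrix_mul continuous_const
  exact ((h1.matrix_mul h1.matrix_transpose).matrix_det).measurable
    (measurableSet_singleton (0 : ℝ)).compl

lemma pi_ac_aux {α : Type*} [MeasurableSpace α] (μ ν : Measure α) [IsProbabilityMeasure μ]
    [SigmaFinite ν] (h : μ ≪ ν) :
    ∀ k : ℕ, (Measure.pi fun _ : Fin k => μ) ≪ (Measure.pi fun _ : Fin k => ν)
  | 0 => by
    rw [Measure.pi_of_empty (fun _ : Fin 0 => μ), Measure.pi_of_empty (fun _ : Fin 0 => ν)]
  | (k + 1) => by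
    have IH := pi_ac_aux μ ν h k
    set e := MeasurableEquiv.piFinSuccAbove (fun _ : Fin (k + 1) => α) 0 with he
    have h1 := measurePreserving_piFinSuccAbove (fun _ : Fin (k + 1) => μ) 0
    have h2 := measurePreserving_piFinSuccAbove (fun _ : Fin (k + 1) => ν) 0
    have hmap := (Measure.AbsolutelyContinuous.prod h IH).map e.symm.measurable
    rwa [(h1.symm e).map_eq, (h2.symm e).map_eq] at hmap

lemma cons_mul_aux {l m n : ℕ} (x : Fin m → ℝ) (Γs : Fin l → Fin m → ℝ)
    (A : Matrix (Fin m) (Fin n) ℝ) :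
    Matrix.of (Fin.cons x Γs) * A = Matrix.of (Fin.cons (x ᵥ* A) (Matrix.of Γs * A)) := by
  ext i j
  refine Fin.cases ?_ ?_ i
  · simp [Matrix.mul_apply, Matrix.vecMul, dotProduct]
    rfl
  · intro i
    simp [Matrix.mul_apply]
    rfl

lemma main_li_aux {m n : ℕ} (μ : Measure ℝ) [IsProbabilityMeasure μ] (hμ : μ ≪ volume)
    (A : Matrix (Fin m) (Fin n) ℝ) :
    ∀ l : ℕ, l ≤ A.rank →
      ∀ᵐ Γ ∂(Measure.pi fun _ : Fin l => Measure.pi fun _ : Fin m => μ),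
        LinearIndependent ℝ (Matrix.of Γ * A) := by
  intro l
  induction l with
  | zero =>
    intro _
    filter_upwards with Γ
    exact linearIndependent_empty_type
  | succ l IH =>
    intro hl
    have IH' := IH (Nat.le_of_succ_le hl)
    set ν := Measure.pi fun _ : Fin m => μ with hν
    set ρ := Measure.pi fun _ : Fin l => ν with hρ
    set e := MeasurableEquiv.piFinSuccAbove (fun _ : Fin (l + 1) => (Fin m → ℝ)) 0 with he
    have hmp := measurePreserving_piFinSuccAbove (fun _ : Fin (l + 1) => ν) 0
    have h0 : (Measure.pi fun _ : Fin (l + 1) => ν) = Measure.map e.symm (ν.prod ρ) :=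
      ((hmp.symm e).map_eq).symm
    rw [h0]
    refine (ae_map_iff e.symm.measurable.aemeasurable (measurableSet_li_aux A)).mpr ?_
    have hmeas2 : MeasurableSet {z : (Fin m → ℝ) × (Fin l → Fin m → ℝ) |
        LinearIndependent ℝ (Matrix.of (e.symm z) * A)} :=
      e.symm.measurable (measurableSet_li_aux A)
    rw [Measure.ae_prod_iff_ae_ae hmeas2, Measure.ae_ae_comm hmeas2]
    have hcons : ∀ (x : Fin m → ℝ) (Γs : Fin l → Fin m → ℝ),
        (e.symm (x, Γs) : Fin (l + 1) → Fin m → ℝ) = Fin.cons x Γs := by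
      intro x Γs
      simp [he, MeasurableEquiv.piFinSuccAbove, Fin.insertNth_zero', Fin.consEquiv]
    filter_upwards [IH'] with Γs hΓs
    set S0 : Submodule ℝ (Fin n → ℝ) := Submodule.span ℝ (Set.range (Matrix.of Γs * A)) with hS0
    set W : Submodule ℝ (Fin m → ℝ) := S0.comap A.vecMulLinear with hW
    have hWne : W ≠ ⊤ := by
      intro htop
      have hle : LinearMap.range A.vecMulLinear ≤ S0 := by
        rintro y ⟨x, rfl⟩
        have hx : x ∈ W := htop ▸ Submodule.mem_top
        exact hx
      have hA1 : A.rank ≤ Module.finrank ℝ S0 := by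
        rw [Matrix.rank_eq_finrank_span_row, ← range_vecMulLinear]
        exact Submodule.finrank_mono hle
      have hA2 : Module.finrank ℝ S0 ≤ l := by
        exact (finrank_range_le_card (Matrix.of Γs * A)).trans_eq (Fintype.card_fin l)
      omega
    have hν0 : ν (W : Set (Fin m → ℝ)) = 0 := by
      have hvol : (Measure.pi fun _ : Fin m => (volume : Measure ℝ)) (W : Set (Fin m → ℝ)) = 0 := by
        rw [← MeasureTheory.volume_pi]
        exact Measure.addHaar_submodule _ W hWne
      exact pi_ac_aux μ volume hμ m hvol
    have hae : ∀ᵐ x ∂ν, x ∉ (W : Set (Fin m → ℝ)) := measure_eq_zero_iff_ae_notMem.mp hν0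
    filter_upwards [hae] with x hx
    rw [hcons x Γs, cons_mul_aux x Γs A]
    show LinearIndependent ℝ (Fin.cons (x ᵥ* A) (Matrix.of Γs * A) : Fin (l + 1) → Fin n → ℝ)
    refine linearIndependent_fin_cons.mpr ⟨hΓs, ?_⟩
    intro hmem
    exact hx (Submodule.mem_comap.mpr (by simpa [Matrix.vecMulLinear] using hmem))

/-- Sketch for the randomized rangefinder: if `Γ` is a random `l × m` real matrix whose
entries are i.i.d. with common law `μ`, a probability measure absolutely continuous with
respect to Lebesgue measure (so `Γ` is distributed according to the product measure), and
`A` is a fixed `m × n` real matrix of rank `r` with `l ≤ r`, then almost surely the row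
sketch `X = Γ A` has full row rank, i.e., `rank (Γ A) = l`. -/
theorem sketch_full_row_rank {l m n r : ℕ}
    (μ : Measure ℝ) [IsProbabilityMeasure μ] (hμ : μ ≪ (volume : Measure ℝ))
    (A : Matrix (Fin m) (Fin n) ℝ) (hA : A.rank = r) (hlr : l ≤ r) :
    ∀ᵐ Γ ∂(Measure.pi fun _ : Fin l => Measure.pi fun _ : Fin m => μ),
      (Matrix.of Γ * A).rank = l := by
  subst hA
  filter_upwards [main_li_aux μ hμ A l hlr] with Γ hΓ
  exact hΓ.rank_matrix.trans (Fintype.card_fin l)
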